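/- Assume 0 ≤ r ≤ m. Then the set {φ ∈ Hom_ℂ(p_J, C_J) : dim(U_φ ∩ V_{n−d}) ≥ r} is in bijection with the product {X ∈ Mat_{m×m}(ℂ) : rank X ≤ m−r} × ℂ^{d(n−d)−m²}, via the map sending φ to the pair consisting of X_φ and the tuple of the remaining d(n−d)−m² matrix entries a_{i,j} of φ (those with (i,j) not indexing an entry of X_φ). -/
import Mathlib


/-- The `i`-th standard basis vector of `ℂ^n`. -/
noncomputable def ee (n : ℕ) (i : Fin n) : Fin n → ℂ := Pi.single i 1

/-- `V_{n-d}`: the span of the last `n - d` standard basis vectors. -/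
noncomputable def Vhigh (n d : ℕ) : Submodule ℂ (Fin n → ℂ) :=
  Submodule.span ℂ {v | ∃ i : Fin n, d ≤ i.val ∧ v = ee n i}

/-- The columns of `X_φ`: the set `J_{>d}` (0-indexed: elements of `J` with value `≥ d`). -/
def colsF (n d : ℕ) (J : Finset (Fin n)) : Finset (Fin n) :=
  J.filter fun j : Fin n => d ≤ j.val

/-- The rows of `X_φ`: the set `{1,…,d} ∖ J` (0-indexed: indices `< d` not in `J`). -/
def rowsF (n d : ℕ) (J : Finset (Fin n)) : Finset (Fin n) :=
  (Finset.univ.filter fun i : Fin n => i.val < d) \ J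

/-- The subspace `U_φ = span{e_j + φ(e_j) : j ∈ J}`, where the linear map
`φ : p_J → C_J` is encoded by its matrix of coefficients `a`. -/
noncomputable def Uphi (n : ℕ) (J : Finset (Fin n))
    (a : {i : Fin n // i ∉ J} → {j : Fin n // j ∈ J} → ℂ) : Submodule ℂ (Fin n → ℂ) :=
  Submodule.span ℂ {v | ∃ j : {j : Fin n // j ∈ J},
    v = ee n j.1 + ∑ i : {i : Fin n // i ∉ J}, a i j • ee n i.1}

/-- The `m × m` matrix `X_φ`, with rows indexed by `{1,…,d} ∖ J` and columns by
`J_{>d}`, both listed in increasing order. -/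
noncomputable def Xphi (n d : ℕ) (J : Finset (Fin n)) (m : ℕ)
    (hrows : (rowsF n d J).card = m) (hcols : (colsF n d J).card = m)
    (a : {i : Fin n // i ∉ J} → {j : Fin n // j ∈ J} → ℂ) :
    Matrix (Fin m) (Fin m) ℂ :=
  Matrix.of fun p q =>
    a ⟨((rowsF n d J).orderIsoOfFin hrows p : Fin n), by
        have h := ((rowsF n d J).orderIsoOfFin hrows p).2
        simp only [rowsF, Finset.mem_sdiff] at h
        exact h.2⟩
      ⟨((colsF n d J).orderIsoOfFin hcols q : Fin n), by
        have h := ((colsF n d J).orderIsoOfFin hcols q).2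
        simp only [colsF, Finset.mem_filter] at h
        exact h.1⟩

/-- The index type of the "remaining" matrix entries of `φ`: pairs `(i, j)` with
`i ∉ J`, `j ∈ J` that do not index an entry of `X_φ`. -/
abbrev RemPair (n d : ℕ) (J : Finset (Fin n)) :=
  {p : {i : Fin n // i ∉ J} × {j : Fin n // j ∈ J} //
    ¬((p.1 : Fin n) ∈ rowsF n d J ∧ (p.2 : Fin n) ∈ colsF n d J)}

/-! ### Auxiliary lemmas -/

lemma ee_apply_ne {n : ℕ} {i k : Fin n} (h : i ≠ k) : ee n i k = 0 :=
  Pi.single_eq_of_ne (Ne.symm h) 1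

lemma ee_apply_self {n : ℕ} (i : Fin n) : ee n i i = 1 := Pi.single_eq_same i 1

lemma mem_Vhigh_iff (n d : ℕ) (v : Fin n → ℂ) :
    v ∈ Vhigh n d ↔ ∀ k : Fin n, k.val < d → v k = 0 := by
  constructor
  · intro hv
    induction hv using Submodule.span_induction with
    | mem x hx =>
      obtain ⟨i, hi, rfl⟩ := hx
      intro k hk
      exact ee_apply_ne (by intro h; subst h; omega)
    | zero => simp
    | add x y _ _ hx hy => intro k hk; simp [hx k hk, hy k hk]
    | smul c x _ hx => intro k hk; simp [hx k hk]
  · intro h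
    have hv : v = ∑ k : Fin n, Pi.single k (v k) := (Finset.univ_sum_single v).symm
    rw [hv]
    apply Submodule.sum_mem
    intro k _
    by_cases hk : k.val < d
    · rw [h k hk]; simp
    · have heq : Pi.single k (v k) = v k • ee n k := by
        unfold ee
        rw [← Pi.single_smul]
        norm_num
      rw [heq]
      exact Submodule.smul_mem _ _ (Submodule.subset_span ⟨k, by omega, rfl⟩)

section

variable {n d : ℕ} {J : Finset (Fin n)}
variable (a : {i : Fin n // i ∉ J} → {j : Fin n // j ∈ J} → ℂ)

noncomputable def uvec (j : {j : Fin n // j ∈ J}) : Fin n → ℂ :=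
  ee n j.1 + ∑ i : {i : Fin n // i ∉ J}, a i j • ee n i.1

lemma Uphi_eq_span_range : Uphi n J a = Submodule.span ℂ (Set.range (uvec a)) := by
  unfold Uphi uvec
  congr 1
  ext v
  simp [Set.range, eq_comm]

lemma uvec_apply_mem (j : {j : Fin n // j ∈ J}) (k : Fin n) (hk : k ∈ J) :
    uvec a j k = if j.1 = k then 1 else 0 := by
  unfold uvec
  simp only [Pi.add_apply, Finset.sum_apply, Pi.smul_apply, smul_eq_mul]
  have h2 : ∀ i : {i : Fin n // i ∉ J}, a i j * ee n i.1 k = 0 := by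
    intro i
    have : i.1 ≠ k := fun h => i.2 (h ▸ hk)
    simp [ee_apply_ne this]
  rw [Finset.sum_congr rfl (fun i _ => h2 i)]
  unfold ee
  simp [Pi.single_apply, eq_comm]

lemma uvec_apply_notMem (j : {j : Fin n // j ∈ J}) (k : Fin n) (hk : k ∉ J) :
    uvec a j k = a ⟨k, hk⟩ j := by
  unfold uvec
  simp only [Pi.add_apply, Finset.sum_apply, Pi.smul_apply, smul_eq_mul]
  have h1 : ee n j.1 k = 0 := ee_apply_ne (fun h => hk (h ▸ j.2))
  rw [h1, Finset.sum_eq_single ⟨k, hk⟩]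
  · simp [ee_apply_self]
  · intro i _ hi
    have : i.1 ≠ k := fun h => hi (Subtype.ext h)
    simp [ee_apply_ne this]
  · simp

end

section

variable {n d : ℕ} {J : Finset (Fin n)} {m : ℕ}
  (hcols : (colsF n d J).card = m) (hrows : (rowsF n d J).card = m)
  (a : {i : Fin n // i ∉ J} → {j : Fin n // j ∈ J} → ℂ)

def colJ (q : Fin m) : {j : Fin n // j ∈ J} :=
  ⟨((colsF n d J).orderIsoOfFin hcols q : Fin n), by
    have h := ((colsF n d J).orderIsoOfFin hcols q).2
    simp only [colsF, Finset.mem_filter] at h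
    exact h.1⟩

def rowI (p : Fin m) : {i : Fin n // i ∉ J} :=
  ⟨((rowsF n d J).orderIsoOfFin hrows p : Fin n), by
    have h := ((rowsF n d J).orderIsoOfFin hrows p).2
    simp only [rowsF, Finset.mem_sdiff] at h
    exact h.2⟩

lemma Xphi_eq (p q : Fin m) :
    Xphi n d J m hrows hcols a p q = a (rowI hrows p) (colJ hcols q) := rfl

lemma colJ_mem_cols (q : Fin m) : (colJ hcols q).1 ∈ colsF n d J :=
  ((colsF n d J).orderIsoOfFin hcols q).2

lemma colJ_val_ge (q : Fin m) : d ≤ (colJ hcols q).1.val := by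
  have h := colJ_mem_cols hcols q
  simp only [colsF, Finset.mem_filter] at h
  exact h.2

lemma rowI_mem_rows (p : Fin m) : (rowI hrows p).1 ∈ rowsF n d J :=
  ((rowsF n d J).orderIsoOfFin hrows p).2

lemma rowI_val_lt (p : Fin m) : (rowI hrows p).1.val < d := by
  have h := rowI_mem_rows hrows p
  simp only [rowsF, Finset.mem_sdiff, Finset.mem_filter] at h
  exact h.1.2

lemma colJ_injective : Function.Injective (colJ hcols) := by
  intro q q' h
  have := congrArg Subtype.val h
  simpa using ((colsF n d J).orderIsoOfFin hcols).injective (Subtype.ext this)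

lemma colJ_surj {j : {j : Fin n // j ∈ J}} (hj : j.1 ∈ colsF n d J) :
    ∃ q : Fin m, colJ hcols q = j := by
  refine ⟨((colsF n d J).orderIsoOfFin hcols).symm ⟨j.1, hj⟩, ?_⟩
  apply Subtype.ext
  show (((colsF n d J).orderIsoOfFin hcols)
    (((colsF n d J).orderIsoOfFin hcols).symm ⟨j.1, hj⟩)).1 = j.1
  rw [OrderIso.apply_symm_apply]

lemma rowI_surj {i : Fin n} (hi : i ∈ rowsF n d J) :
    ∃ p : Fin m, (rowI hrows p).1 = i := by
  refine ⟨((rowsF n d J).orderIsoOfFin hrows).symm ⟨i, hi⟩, ?_⟩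
  show (((rowsF n d J).orderIsoOfFin hrows)
    (((rowsF n d J).orderIsoOfFin hrows).symm ⟨i, hi⟩)).1 = i
  rw [OrderIso.apply_symm_apply]

lemma sum_cols {M : Type*} [AddCommMonoid M] (f : {j : Fin n // j ∈ J} → M)
    (hf : ∀ j, j.1 ∉ colsF n d J → f j = 0) :
    ∑ j, f j = ∑ q : Fin m, f (colJ hcols q) := by
  rw [← Finset.sum_filter_of_ne (p := fun j : {j : Fin n // j ∈ J} => j.1 ∈ colsF n d J)
    (fun x _ hx => by by_contra h; exact hx (hf x h))]
  refine (Finset.sum_bij (fun q _ => colJ hcols q) ?_ ?_ ?_ ?_).symm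
  · intro q _; simp [colJ_mem_cols hcols q]
  · intro q _ q' _ h; exact colJ_injective hcols h
  · intro j hj
    simp only [Finset.mem_filter] at hj
    exact (colJ_surj hcols hj.2).imp (fun q hq => ⟨Finset.mem_univ _, hq⟩)
  · intros; rfl

noncomputable def Tmap : (Fin m → ℂ) →ₗ[ℂ] (Fin n → ℂ) where
  toFun c := ∑ q, c q • uvec a (colJ hcols q)
  map_add' c c' := by simp [add_smul, Finset.sum_add_distrib]
  map_smul' s c := by simp [smul_smul, Finset.smul_sum]

lemma Tmap_apply (c : Fin m → ℂ) (k : Fin n) :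
    Tmap hcols a c k = ∑ q, c q * uvec a (colJ hcols q) k := by
  simp [Tmap]

lemma Tmap_apply_colJ (c : Fin m → ℂ) (q : Fin m) :
    Tmap hcols a c (colJ hcols q).1 = c q := by
  rw [Tmap_apply, Finset.sum_eq_single q]
  · rw [uvec_apply_mem a _ _ (colJ hcols q).2]
    simp
  · intro q' _ hq'
    rw [uvec_apply_mem a _ _ (colJ hcols q).2, if_neg, mul_zero]
    intro h
    exact hq' (colJ_injective hcols (Subtype.ext h))
  · simp

lemma Tmap_injective : Function.Injective (Tmap hcols a) := by
  rw [injective_iff_map_eq_zero]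
  intro c hc
  funext q
  have := congrFun hc (colJ hcols q).1
  rwa [Tmap_apply_colJ] at this

lemma map_Tmap_ker :
    Submodule.map (Tmap hcols a)
        (LinearMap.ker (Xphi n d J m hrows hcols a).mulVecLin) =
      Uphi n J a ⊓ Vhigh n d := by
  apply le_antisymm
  · rintro _ ⟨c, hc, rfl⟩
    simp only [SetLike.mem_coe, LinearMap.mem_ker, Matrix.mulVecLin_apply] at hc
    refine Submodule.mem_inf.mpr ⟨?_, ?_⟩
    · rw [Uphi_eq_span_range]
      show (∑ q, c q • uvec a (colJ hcols q)) ∈ _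
      exact Submodule.sum_mem _ fun q _ =>
        Submodule.smul_mem _ _ (Submodule.subset_span (Set.mem_range_self (f := uvec a) (colJ hcols q)))
    · rw [mem_Vhigh_iff]
      intro k hk
      rw [Tmap_apply]
      by_cases hkJ : k ∈ J
      · refine Finset.sum_eq_zero fun q _ => ?_
        rw [uvec_apply_mem a _ _ hkJ, if_neg, mul_zero]
        intro h
        have := colJ_val_ge hcols q
        omega
      · have hkr : k ∈ rowsF n d J := by
          simp only [rowsF, Finset.mem_sdiff, Finset.mem_filter]
          exact ⟨⟨Finset.mem_univ _, hk⟩, hkJ⟩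
        obtain ⟨p, hp⟩ := rowI_surj hrows hkr
        have := congrFun hc p
        rw [Matrix.mulVec, dotProduct, Pi.zero_apply] at this
        rw [← this]
        refine Finset.sum_congr rfl fun q _ => ?_
        rw [uvec_apply_notMem a _ _ hkJ, Xphi_eq, mul_comm]
        congr 1
        congr 1
        exact Subtype.ext hp.symm
  · intro u hu
    obtain ⟨hu, hv⟩ := Submodule.mem_inf.mp hu
    rw [Uphi_eq_span_range, Submodule.mem_span_range_iff_exists_fun] at hu
    obtain ⟨c, hc⟩ := hu
    rw [mem_Vhigh_iff] at hv
    have hcoef : ∀ j : {j : Fin n // j ∈ J}, c j = u j.1 := by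
      intro j
      rw [← hc]
      simp only [Finset.sum_apply, Pi.smul_apply, smul_eq_mul]
      rw [Finset.sum_eq_single j]
      · rw [uvec_apply_mem a _ _ j.2, if_pos rfl, mul_one]
      · intro j' _ hj'
        rw [uvec_apply_mem a _ _ j.2, if_neg (fun h => hj' (Subtype.ext h)), mul_zero]
      · simp
    have hlow : ∀ j : {j : Fin n // j ∈ J}, j.1.val < d → c j = 0 := by
      intro j hj
      rw [hcoef j]
      exact hv j.1 hj
    have hnotcol : ∀ j : {j : Fin n // j ∈ J}, j.1 ∉ colsF n d J → c j = 0 := by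
      intro j hj
      apply hlow
      simp only [colsF, Finset.mem_filter] at hj
      push_neg at hj
      exact hj j.2
    refine ⟨fun q => c (colJ hcols q), ?_, ?_⟩
    · simp only [SetLike.mem_coe, LinearMap.mem_ker, Matrix.mulVecLin_apply]
      funext p
      rw [Matrix.mulVec, dotProduct]
      simp only [Pi.zero_apply]
      have hup : u (rowI hrows p).1 = 0 := hv _ (rowI_val_lt hrows p)
      rw [← hc] at hup
      simp only [Finset.sum_apply, Pi.smul_apply, smul_eq_mul] at hup
      have hsum := sum_cols hcols (fun j => c j * uvec a j (rowI hrows p).1)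
        (fun j hj => by simp [hnotcol j hj])
      rw [hsum] at hup
      rw [← hup]
      refine Finset.sum_congr rfl fun q _ => ?_
      show Xphi n d J m hrows hcols a p q * c (colJ hcols q)
          = c (colJ hcols q) * uvec a (colJ hcols q) (rowI hrows p).1
      rw [Xphi_eq, uvec_apply_notMem a _ _ (rowI hrows p).2, mul_comm]
    · have hsum := sum_cols hcols (fun j => c j • uvec a j)
        (fun j hj => by simp [hnotcol j hj])
      show ∑ q, c (colJ hcols q) • uvec a (colJ hcols q) = u
      rw [← hsum, hc]

lemma finrank_inf_eq :
    Module.finrank ℂ ↥(Uphi n J a ⊓ Vhigh n d) =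
      m - (Xphi n d J m hrows hcols a).rank := by
  rw [← map_Tmap_ker hcols hrows a]
  rw [← LinearEquiv.finrank_eq
    (Submodule.equivMapOfInjective _ (Tmap_injective hcols a) _)]
  have h := LinearMap.finrank_range_add_finrank_ker
    (Xphi n d J m hrows hcols a).mulVecLin
  have hfr : Module.finrank ℂ (Fin m → ℂ) = m := by simp
  rw [hfr] at h
  have hrk : (Xphi n d J m hrows hcols a).rank =
      Module.finrank ℂ (LinearMap.range (Xphi n d J m hrows hcols a).mulVecLin) := rfl
  omega

end

theorem stmt9 (n d : ℕ) (hd1 : 1 ≤ d) (hdn : d ≤ n - d)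
    (J : Finset (Fin n)) (hJ : J.card = d) (m : ℕ)
    (hcols : (colsF n d J).card = m) (hrows : (rowsF n d J).card = m)
    (r : ℕ) (hr : r ≤ m) :
    Fintype.card (RemPair n d J) = d * (n - d) - m ^ 2 ∧
    Set.BijOn
      (fun a : {i : Fin n // i ∉ J} → {j : Fin n // j ∈ J} → ℂ =>
        (Xphi n d J m hrows hcols a, fun p : RemPair n d J => a p.1.1 p.1.2))
      {a | r ≤ Module.finrank ℂ ↥(Uphi n J a ⊓ Vhigh n d)}
      ({X : Matrix (Fin m) (Fin m) ℂ | X.rank ≤ m - r} ×ˢ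
        (Set.univ : Set (RemPair n d J → ℂ))) := by
  classical
  have hrankle : ∀ a, (Xphi n d J m hrows hcols a).rank ≤ m := fun a =>
    (Matrix.rank_le_card_width _).trans (Fintype.card_fin m).le
  have hiff : ∀ a, (r ≤ Module.finrank ℂ ↥(Uphi n J a ⊓ Vhigh n d)) ↔
      (Xphi n d J m hrows hcols a).rank ≤ m - r := by
    intro a
    rw [finrank_inf_eq hcols hrows a]
    have := hrankle a
    omega
  constructor
  · -- cardinality
    have h1 : Fintype.card (RemPair n d J) =
        Fintype.card ({i : Fin n // i ∉ J} × {j : Fin n // j ∈ J}) -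
        Fintype.card {p : {i : Fin n // i ∉ J} × {j : Fin n // j ∈ J} //
          (p.1 : Fin n) ∈ rowsF n d J ∧ (p.2 : Fin n) ∈ colsF n d J} :=
      Fintype.card_subtype_compl _
    have hA : Fintype.card {i : Fin n // i ∉ J} = n - d := by
      rw [Fintype.card_subtype_compl, Fintype.card_coe, hJ, Fintype.card_fin]
    have hB : Fintype.card {j : Fin n // j ∈ J} = d := by
      rw [Fintype.card_coe, hJ]
    have h2 : Fintype.card {p : {i : Fin n // i ∉ J} × {j : Fin n // j ∈ J} //
          (p.1 : Fin n) ∈ rowsF n d J ∧ (p.2 : Fin n) ∈ colsF n d J} = m * m := by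
      rw [Fintype.card_congr (Equiv.subtypeProdEquivProd
        (p := fun i : {i : Fin n // i ∉ J} => (i : Fin n) ∈ rowsF n d J)
        (q := fun j : {j : Fin n // j ∈ J} => (j : Fin n) ∈ colsF n d J))]
      rw [Fintype.card_prod]
      have e1 := Equiv.subtypeSubtypeEquivSubtype
        (p := fun i : Fin n => i ∉ J) (q := fun i : Fin n => i ∈ rowsF n d J)
        (fun {x} hx => by simp only [rowsF, Finset.mem_sdiff] at hx; exact hx.2)
      have e2 := Equiv.subtypeSubtypeEquivSubtype
        (p := fun j : Fin n => j ∈ J) (q := fun j : Fin n => j ∈ colsF n d J)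
        (fun {x} hx => by simp only [colsF, Finset.mem_filter] at hx; exact hx.1)
      rw [Fintype.card_congr e1, Fintype.card_congr e2, Fintype.card_coe,
        Fintype.card_coe, hrows, hcols]
    rw [h1, Fintype.card_prod, hA, hB, h2, pow_two, Nat.mul_comm (n - d) d]
  · refine ⟨?_, ?_, ?_⟩
    · -- MapsTo
      intro a ha
      exact ⟨(hiff a).mp ha, Set.mem_univ _⟩
    · -- InjOn
      intro a _ b _ h
      simp only [Prod.mk.injEq] at h
      obtain ⟨hX, hrem⟩ := h
      funext i j
      by_cases hij : (i : Fin n) ∈ rowsF n d J ∧ (j : Fin n) ∈ colsF n d J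
      · obtain ⟨p, hp⟩ := rowI_surj hrows hij.1
        obtain ⟨q, hq⟩ := colJ_surj hcols hij.2
        have hi : rowI hrows p = i := Subtype.ext hp
        have h3 := congrFun (congrFun hX p) q
        rw [Xphi_eq, Xphi_eq, hi, hq] at h3
        exact h3
      · exact congrFun hrem ⟨(i, j), hij⟩
    · -- SurjOn
      rintro ⟨X, g⟩ ⟨hX, -⟩
      set a : {i : Fin n // i ∉ J} → {j : Fin n // j ∈ J} → ℂ := fun i j =>
        if h : (i : Fin n) ∈ rowsF n d J ∧ (j : Fin n) ∈ colsF n d J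
        then X (((rowsF n d J).orderIsoOfFin hrows).symm ⟨i.1, h.1⟩)
             (((colsF n d J).orderIsoOfFin hcols).symm ⟨j.1, h.2⟩)
        else g ⟨(i, j), h⟩ with ha
      have hXa : Xphi n d J m hrows hcols a = X := by
        funext p q
        rw [Xphi_eq]
        simp only [ha]
        rw [dif_pos ⟨rowI_mem_rows hrows p, colJ_mem_cols hcols q⟩]
        have h1 : (⟨(rowI hrows p).1, rowI_mem_rows hrows p⟩ :
            {x // x ∈ rowsF n d J}) = (rowsF n d J).orderIsoOfFin hrows p := rfl
        have h2 : (⟨(colJ hcols q).1, colJ_mem_cols hcols q⟩ :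
            {x // x ∈ colsF n d J}) = (colsF n d J).orderIsoOfFin hcols q := rfl
        rw [h1, h2, OrderIso.symm_apply_apply, OrderIso.symm_apply_apply]
      have hga : (fun pp : RemPair n d J => a pp.1.1 pp.1.2) = g := by
        funext pp
        simp only [ha]
        exact dif_neg pp.2
      refine ⟨a, ?_, ?_⟩
      · show r ≤ Module.finrank ℂ ↥(Uphi n J a ⊓ Vhigh n d)
        rw [hiff a, hXa]
        exact hX
      · show (Xphi n d J m hrows hcols a, _) = (X, g)
        rw [hXa, hga]
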